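/- Let C be a binary linear code in 𝔽₂ⁿ with n ≥ 2 and minimum distance at least 7. Then for every vertex x+C of the distance-2 graph of Γ(C), the subgraph induced on its neighborhood is isomorphic to the triangular graph Tₙ, via the map sending the 2-subset {i,j} to x+e_{i,j}+C. -/

import Mathlib

/-- The standard basis vector `e_i` of `𝔽₂ⁿ`. -/
def stdBasis (n : ℕ) (i : Fin n) : Fin n → ZMod 2 :=
  fun k => if k = i then 1 else 0

lemma stdBasis_add_self (n : ℕ) (i : Fin n) : stdBasis n i + stdBasis n i = 0 := by
  funext k; exact CharTwo.add_self_eq_zero _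

/-- The coset graph `Γ(C)` of a binary linear code `C ≤ 𝔽₂ⁿ`: vertices are the
cosets of `C`, with `x + C` adjacent to `x + e_i + C` (when distinct). -/
def cosetGraph {n : ℕ} (C : Submodule (ZMod 2) (Fin n → ZMod 2)) :
    SimpleGraph ((Fin n → ZMod 2) ⧸ C) where
  Adj a b := a ≠ b ∧ ∃ i : Fin n, b = a + Submodule.Quotient.mk (stdBasis n i)
  symm := ⟨by
    rintro a b ⟨hne, i, rfl⟩
    refine ⟨hne.symm, i, ?_⟩
    rw [add_assoc, ← Submodule.Quotient.mk_add, stdBasis_add_self]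
    simp⟩
  loopless := ⟨fun a h => h.1 rfl⟩

/-- `C` has minimum distance at least `d`: every nonzero codeword has
Hamming weight at least `d`. -/
def MinDistAtLeast {n : ℕ} (C : Submodule (ZMod 2) (Fin n → ZMod 2)) (d : ℕ) : Prop :=
  ∀ c ∈ C, c ≠ 0 → d ≤ hammingNorm c

/-- The distance-2 graph of a graph `G`. -/
def dist2 {V : Type*} (G : SimpleGraph V) : SimpleGraph V where
  Adj u v := G.dist u v = 2
  symm := ⟨fun u v h => by rwa [SimpleGraph.dist_comm]⟩
  loopless := ⟨fun u h => by simp only [SimpleGraph.dist_self] at h; omega⟩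

namespace LocTri

open scoped symmDiff

variable {n : ℕ} {C : Submodule (ZMod 2) (Fin n → ZMod 2)}

/-- indicator vector of a finset -/
def chi (s : Finset (Fin n)) : Fin n → ZMod 2 := fun k => if k ∈ s then 1 else 0

lemma zmod2_cases (a : ZMod 2) : a = 0 ∨ a = 1 := by revert a; decide

lemma hammingNorm_chi (s : Finset (Fin n)) : hammingNorm (chi s) = s.card := by
  unfold hammingNorm chi
  congr 1
  ext k
  by_cases h : k ∈ s <;> simp [h]

lemma chi_add_chi (s t : Finset (Fin n)) : chi s + chi t = chi (s ∆ t) := by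
  funext k
  simp only [chi, Pi.add_apply, Finset.mem_symmDiff]
  by_cases hs : k ∈ s <;> by_cases ht : k ∈ t <;> simp [hs, ht]
  · decide

lemma chi_support (v : Fin n → ZMod 2) :
    v = chi {k | v k ≠ 0} ∧ (Finset.filter (fun k => v k ≠ 0) Finset.univ).card = hammingNorm v := by
  constructor
  · funext k
    rcases zmod2_cases (v k) with h | h <;> simp [chi, h]
  · rfl

lemma hammingDist_eq_hammingNorm' (x y : Fin n → ZMod 2) :
    hammingDist x y = hammingNorm (x - y) := by
  rw [hammingDist_comm, hammingDist_eq_hammingNorm, neg_add_eq_sub]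

lemma norm_add_le (u v : Fin n → ZMod 2) :
    hammingNorm (u + v) ≤ hammingNorm u + hammingNorm v := by
  have h1 := hammingDist_triangle (u + v) v 0
  rw [hammingDist_zero_right, hammingDist_eq_hammingNorm', add_sub_cancel_right] at h1
  exact h1

lemma norm_stdBasis (i : Fin n) : hammingNorm (stdBasis n i) = 1 := by
  unfold hammingNorm stdBasis
  rw [show (Finset.filter (fun k => (if k = i then (1:ZMod 2) else 0) ≠ 0) Finset.univ) = {i} by
    ext k; by_cases h : k = i <;> simp [h]]
  simp

lemma card_symmDiff (s t : Finset (Fin n)) :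
    (s ∆ t).card + 2 * (s ∩ t).card = s.card + t.card := by
  have h1 := Finset.card_sdiff_add_card_inter s t
  have h2 := Finset.card_sdiff_add_card_inter t s
  rw [Finset.inter_comm] at h2
  have h3 : (s ∆ t).card = (s \ t).card + (t \ s).card := by
    rw [symmDiff_def, Finset.sup_eq_union,
      Finset.card_union_of_disjoint disjoint_sdiff_sdiff]
  omega

/-- A walk of length ≤ 1 from `a` to `a + e_i`. -/
lemma step (a : (Fin n → ZMod 2) ⧸ C) (i : Fin n) :
    ∃ p : (cosetGraph C).Walk a (a + Submodule.Quotient.mk (stdBasis n i)), p.length ≤ 1 := by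
  by_cases h : a = a + Submodule.Quotient.mk (stdBasis n i)
  · exact ⟨SimpleGraph.Walk.nil.copy rfl h, by simp⟩
  · exact ⟨SimpleGraph.Walk.cons (show (cosetGraph C).Adj _ _ from ⟨h, i, rfl⟩) SimpleGraph.Walk.nil, by simp⟩

lemma walk_chi (a : (Fin n → ZMod 2) ⧸ C) (s : Finset (Fin n)) :
    ∃ p : (cosetGraph C).Walk a (a + Submodule.Quotient.mk (chi s)), p.length ≤ s.card := by
  classical
  induction s using Finset.induction_on with
  | empty =>
    have h0 : chi (∅ : Finset (Fin n)) = 0 := by funext k; simp [chi]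
    refine ⟨SimpleGraph.Walk.nil.copy rfl (by rw [h0]; simp), ?_⟩
    rw [SimpleGraph.Walk.length_copy]
    simp
  | @insert i s hi ih =>
    obtain ⟨p, hp⟩ := ih
    obtain ⟨q, hq⟩ := step (a + Submodule.Quotient.mk (chi s)) i
    have he : a + Submodule.Quotient.mk (chi s) + Submodule.Quotient.mk (stdBasis n i)
        = a + Submodule.Quotient.mk (chi (insert i s)) := by
      rw [add_assoc, ← Submodule.Quotient.mk_add]
      congr 2
      funext k
      simp only [chi, stdBasis, Pi.add_apply, Finset.mem_insert]
      by_cases h1 : k = i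
      · simp [h1, hi]
      · simp [h1]
    refine ⟨p.append (q.copy rfl he), ?_⟩
    rw [SimpleGraph.Walk.length_append, SimpleGraph.Walk.length_copy,
      Finset.card_insert_of_notMem hi]
    omega

lemma walk_of_vec (a : (Fin n → ZMod 2) ⧸ C) (v : Fin n → ZMod 2) :
    ∃ p : (cosetGraph C).Walk a (a + Submodule.Quotient.mk v), p.length ≤ hammingNorm v := by
  obtain ⟨h1, h2⟩ := chi_support v
  have := walk_chi (C := C) a {k | v k ≠ 0}
  rw [← h1] at this
  rw [← h2]
  exact this

lemma vec_of_walk {a b : (Fin n → ZMod 2) ⧸ C} (p : (cosetGraph C).Walk a b) :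
    ∃ v : Fin n → ZMod 2, b = a + Submodule.Quotient.mk v ∧ hammingNorm v ≤ p.length := by
  induction p with
  | nil => exact ⟨0, by simp, by simp⟩
  | @cons a c b h p ih =>
    obtain ⟨hne, i, hc⟩ := h
    obtain ⟨v, hv, hlen⟩ := ih
    refine ⟨stdBasis n i + v, ?_, ?_⟩
    · rw [hv, hc, Submodule.Quotient.mk_add, add_assoc]
    · have h1 := norm_add_le (stdBasis n i) v
      rw [norm_stdBasis] at h1
      show hammingNorm (stdBasis n i + v) ≤ p.length + 1
      omega

lemma dist2_adj_iff (hd : MinDistAtLeast C 7) (a b : (Fin n → ZMod 2) ⧸ C) :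
    (dist2 (cosetGraph C)).Adj a b ↔
      ∃ v : Fin n → ZMod 2, hammingNorm v = 2 ∧ b = a + Submodule.Quotient.mk v := by
  constructor
  · intro h
    have h2 : (cosetGraph C).dist a b = 2 := h
    obtain ⟨p, hp⟩ := SimpleGraph.exists_walk_of_dist_ne_zero (G := cosetGraph C) (u := a) (v := b) (by omega)
    obtain ⟨v, hv, hlen⟩ := vec_of_walk p
    rw [hp, h2] at hlen
    refine ⟨v, ?_, hv⟩
    by_contra hne
    have hle1 : hammingNorm v ≤ 1 := by omega
    obtain ⟨q, hq⟩ := walk_of_vec (C := C) a v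
    have hq2 := SimpleGraph.dist_le q
    rw [hv] at h2
    omega
  · rintro ⟨v, hv2, rfl⟩
    have hvne : v ≠ 0 := by
      intro h; rw [h] at hv2; simp at hv2
    obtain ⟨q, hq⟩ := walk_of_vec (C := C) a v
    have hle : (cosetGraph C).dist a (a + Submodule.Quotient.mk v) ≤ 2 := by
      have := SimpleGraph.dist_le q; omega
    have hne : a ≠ a + Submodule.Quotient.mk v := by
      intro h
      have : (Submodule.Quotient.mk v : (Fin n → ZMod 2) ⧸ C) = 0 := by
        rwa [left_eq_add] at h
      have hvC : v ∈ C := (Submodule.Quotient.mk_eq_zero C).mp this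
      have := hd v hvC hvne
      omega
    have h0 : (cosetGraph C).dist a (a + Submodule.Quotient.mk v) ≠ 0 := by
      rw [SimpleGraph.dist_ne_zero_iff_ne_and_reachable]
      exact ⟨hne, ⟨q⟩⟩
    have h1 : (cosetGraph C).dist a (a + Submodule.Quotient.mk v) ≠ 1 := by
      intro heq1
      obtain ⟨-, i, hi⟩ := SimpleGraph.dist_eq_one_iff_adj.mp heq1
      have : (Submodule.Quotient.mk (v - stdBasis n i) : (Fin n → ZMod 2) ⧸ C) = 0 := by
        rw [Submodule.Quotient.mk_sub]
        have : (Submodule.Quotient.mk v : (Fin n → ZMod 2) ⧸ C)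
            = Submodule.Quotient.mk (stdBasis n i) := by
          exact add_left_cancel hi
        rw [this]; simp
      have hC : v - stdBasis n i ∈ C := (Submodule.Quotient.mk_eq_zero C).mp this
      have hne2 : v - stdBasis n i ≠ 0 := by
        intro h
        have : v = stdBasis n i := by rwa [sub_eq_zero] at h
        rw [this, norm_stdBasis] at hv2; omega
      have h7 := hd _ hC hne2
      have hle3 : hammingNorm (v - stdBasis n i) ≤ 3 := by
        have t1 := hammingDist_triangle v 0 (stdBasis n i)
        rw [hammingDist_zero_right, hammingDist_zero_left, norm_stdBasis] at t1
        rw [← hammingDist_eq_hammingNorm']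
        omega
      omega
    show (cosetGraph C).dist a (a + Submodule.Quotient.mk v) = 2
    omega

lemma hammingDist_chi (s t : Finset (Fin n)) :
    hammingDist (chi s) (chi t) = (s ∆ t).card := by
  unfold hammingDist chi
  congr 1
  ext k
  by_cases hs : k ∈ s <;> by_cases ht : k ∈ t <;>
    simp [hs, ht, Finset.mem_symmDiff]

lemma chi_inj {s t : Finset (Fin n)} (h : chi s = chi t) : s = t := by
  ext k
  have hk := congrFun h k
  by_cases hs : k ∈ s <;> by_cases ht : k ∈ t <;> simp_all [chi]

lemma mem_nbhd (hd : MinDistAtLeast C 7) (x : Fin n → ZMod 2)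
    (s : Finset (Fin n)) (hs : s.card = 2) :
    (Submodule.Quotient.mk x + Submodule.Quotient.mk (chi s) : (Fin n → ZMod 2) ⧸ C) ∈
      (dist2 (cosetGraph C)).neighborSet (Submodule.Quotient.mk x) := by
  rw [SimpleGraph.mem_neighborSet, dist2_adj_iff hd]
  exact ⟨chi s, by rw [hammingNorm_chi, hs], rfl⟩

lemma adj_iff (hd : MinDistAtLeast C 7) (x : Fin n → ZMod 2)
    {s t : Finset (Fin n)} (hs : s.card = 2) (ht : t.card = 2) :
    (dist2 (cosetGraph C)).Adj
      (Submodule.Quotient.mk x + Submodule.Quotient.mk (chi s))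
      (Submodule.Quotient.mk x + Submodule.Quotient.mk (chi t)) ↔ (s ∩ t).card = 1 := by
  rw [dist2_adj_iff hd]
  constructor
  · rintro ⟨v, hv2, heq⟩
    rw [add_assoc] at heq
    have h1 := add_left_cancel heq
    rw [← Submodule.Quotient.mk_add] at h1
    have h2 : chi s + v - chi t ∈ C := (Submodule.Quotient.eq C).mp h1.symm
    have h3 : hammingNorm (chi s + v - chi t) ≤ 6 := by
      rw [← hammingDist_eq_hammingNorm']
      have t1 := hammingDist_triangle (chi s + v) (0 : Fin n → ZMod 2) (chi t)
      rw [hammingDist_zero_right, hammingDist_zero_left, hammingNorm_chi, ht] at t1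
      have t2 := norm_add_le (chi s) v
      rw [hammingNorm_chi, hs, hv2] at t2
      omega
    have h4 : chi s + v - chi t = 0 := by
      by_contra h5
      have := hd _ h2 h5
      omega
    have h6 : chi s + v = chi t := by rwa [sub_eq_zero] at h4
    have h7 : v = chi t - chi s := by
      rw [← h6]; ring
    have h8 : hammingNorm v = (t ∆ s).card := by
      rw [h7, ← hammingDist_eq_hammingNorm', hammingDist_chi]
    rw [hv2] at h8
    have h9 := card_symmDiff t s
    rw [Finset.inter_comm] at h9
    omega
  · intro h1
    refine ⟨chi (s ∆ t), ?_, ?_⟩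
    · rw [hammingNorm_chi]
      have := card_symmDiff s t
      omega
    · rw [add_assoc]
      congr 1
      rw [← Submodule.Quotient.mk_add, chi_add_chi, symmDiff_symmDiff_cancel_left]

end LocTri

open LocTri

/-- The triangular graph `Tₙ`: vertices are the 2-subsets of `{1,…,n}`, two of
them adjacent iff they intersect in exactly one point. -/
def triangularGraph (n : ℕ) : SimpleGraph {s : Finset (Fin n) // s.card = 2} where
  Adj s t := (s.1 ∩ t.1).card = 1
  symm := ⟨fun s t h => by rwa [Finset.inter_comm]⟩
  loopless := ⟨fun s h => by
    rw [Finset.inter_self, s.2] at h; omega⟩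

/-- If `C ≤ 𝔽₂ⁿ` has minimum distance at least 7 and `n ≥ 2`, then the subgraph
induced on the neighborhood of any vertex `x + C` of the distance-2 graph of
`Γ(C)` is isomorphic to the triangular graph `Tₙ`, via `{i,j} ↦ x + e_{i,j} + C`. -/
theorem locally_triangular {n : ℕ} (hn : 2 ≤ n)
    (C : Submodule (ZMod 2) (Fin n → ZMod 2)) (hd : MinDistAtLeast C 7)
    (x : Fin n → ZMod 2) :
    ∃ φ : triangularGraph n ≃g
        (dist2 (cosetGraph C)).induce
          ((dist2 (cosetGraph C)).neighborSet (Submodule.Quotient.mk x)),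
      ∀ (s : {s : Finset (Fin n) // s.card = 2}) (i j : Fin n), i ≠ j →
        s.1 = {i, j} →
          (φ s : (Fin n → ZMod 2) ⧸ C) =
            Submodule.Quotient.mk (x + fun k => if k = i ∨ k = j then 1 else 0) := by
  classical
  let f : {s : Finset (Fin n) // s.card = 2} →
      ((dist2 (cosetGraph C)).neighborSet (Submodule.Quotient.mk x)) :=
    fun s => ⟨Submodule.Quotient.mk x + Submodule.Quotient.mk (chi s.1),
      mem_nbhd hd x s.1 s.2⟩
  have hinj : Function.Injective f := by
    intro s t h
    have h1 : (Submodule.Quotient.mk x + Submodule.Quotient.mk (chi s.1)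
        : (Fin n → ZMod 2) ⧸ C)
        = Submodule.Quotient.mk x + Submodule.Quotient.mk (chi t.1) :=
      congrArg Subtype.val h
    have h2 := add_left_cancel h1
    have h3 : chi s.1 - chi t.1 ∈ C := (Submodule.Quotient.eq C).mp h2
    have h4 : hammingNorm (chi s.1 - chi t.1) ≤ 4 := by
      rw [← hammingDist_eq_hammingNorm', hammingDist_chi]
      have := card_symmDiff s.1 t.1
      rw [s.2, t.2] at this
      omega
    have h5 : chi s.1 - chi t.1 = 0 := by
      by_contra h6
      have := hd _ h3 h6
      omega
    rw [sub_eq_zero] at h5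
    exact Subtype.ext (chi_inj h5)
  have hsurj : Function.Surjective f := by
    rintro ⟨b, hb⟩
    rw [SimpleGraph.mem_neighborSet, dist2_adj_iff hd] at hb
    obtain ⟨v, hv2, rfl⟩ := hb
    obtain ⟨h1, h2⟩ := chi_support v
    refine ⟨⟨Finset.filter (fun k => v k ≠ 0) Finset.univ, by rw [h2, hv2]⟩, ?_⟩
    apply Subtype.ext
    show (Submodule.Quotient.mk x
        + Submodule.Quotient.mk (chi (Finset.filter (fun k => v k ≠ 0) Finset.univ))
        : (Fin n → ZMod 2) ⧸ C) = _
    rw [← h1]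
  refine ⟨⟨Equiv.ofBijective f ⟨hinj, hsurj⟩, ?_⟩, ?_⟩
  · intro s t
    show (dist2 (cosetGraph C)).Adj (f s).1 (f t).1 ↔ (s.1 ∩ t.1).card = 1
    exact adj_iff hd x s.2 t.2
  · intro s i j hij hs
    show ((f s : ((dist2 (cosetGraph C)).neighborSet (Submodule.Quotient.mk x)))
        : (Fin n → ZMod 2) ⧸ C) = _
    show (Submodule.Quotient.mk x + Submodule.Quotient.mk (chi s.1)
        : (Fin n → ZMod 2) ⧸ C) = _
    rw [← Submodule.Quotient.mk_add]
    congr 1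
    funext k
    simp only [chi, hs, Pi.add_apply, Finset.mem_insert, Finset.mem_singleton]
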